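/- There exists a regularized robustly reliable learner L with respect to C such that for every dataset S', every mistake budget b ∈ ℕ, and every complexity bound c ∈ ℕ for which some classifier h satisfies C(h) ≤ c and makes at most b mistakes on S', we have R̂4_L(S', b, c) = OPTR̂4(S', b, c). (The learner outputs y = h_{S'}(x) where h_{S'} minimizes C among classifiers with at most b mistakes on S', c_low = C(h_{S'}), and c_high = min{C(h) : h makes at most b mistakes on S' and h(x) ≠ h_{S'}(x)}, with c_high = ⊤ if no such h exists.) -/

import Mathlib

open Classical in
/-- Number of mistakes of classifier `h` on dataset `S`. -/
noncomputable def mistakes {X Y : Type*} (h : X → Y) (S : Finset (X × Y)) : ℕ :=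
  (S.filter fun p => h p.1 ≠ p.2).card

/-- `L` is a regularized robustly reliable learner with respect to complexity measure `C`. -/
def IsRRR {X Y : Type*} (C : (X → Y) → ℕ)
    (L : Finset (X × Y) → X × ℕ → Y × ℕ × ℕ∞) : Prop :=
  ∀ (S' : Finset (X × Y)) (x : X) (b : ℕ),
    (∃ h : X → Y, mistakes h S' ≤ b) →
    (∃ h : X → Y, C h = (L S' (x, b)).2.1 ∧ mistakes h S' ≤ b ∧ h x = (L S' (x, b)).1) ∧
    ∀ h' : X → Y, mistakes h' S' ≤ b → h' x ≠ (L S' (x, b)).1 →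
      (L S' (x, b)).2.2 ≤ (C h' : ℕ∞)

/-- Empirical regularized robustly reliable region of learner `L`. -/
def R4hat {X Y : Type*} (L : Finset (X × Y) → X × ℕ → Y × ℕ × ℕ∞)
    (S' : Finset (X × Y)) (b c : ℕ) : Set X :=
  {x | (L S' (x, b)).2.1 ≤ c ∧ (c : ℕ∞) < (L S' (x, b)).2.2}

/-- Optimal empirical regularized robustly reliable region. -/
def OPTR4hat {X Y : Type*} (C : (X → Y) → ℕ) (S' : Finset (X × Y)) (b c : ℕ) : Set X :=
  {x | ∀ h0 h1 : X → Y, C h0 ≤ c → C h1 ≤ c → mistakes h0 S' ≤ b → mistakes h1 S' ≤ b →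
    h0 x = h1 x}

open Classical in
/-- A classifier minimizing `C` among those with at most `b` mistakes on `S'`
(arbitrary if none exists). -/
noncomputable def bestH {X Y : Type*} [Nonempty Y] (C : (X → Y) → ℕ)
    (S' : Finset (X × Y)) (b : ℕ) : X → Y :=
  if hex : ∃ h : X → Y, mistakes h S' ≤ b then
    Function.argminOn C {h | mistakes h S' ≤ b} hex
  else fun _ => Classical.arbitrary Y

lemma bestH_mistakes {X Y : Type*} [Nonempty Y] (C : (X → Y) → ℕ)
    {S' : Finset (X × Y)} {b : ℕ} (hex : ∃ h : X → Y, mistakes h S' ≤ b) :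
    mistakes (bestH C S' b) S' ≤ b := by
  rw [bestH, dif_pos hex]
  exact Function.argminOn_mem C {h | mistakes h S' ≤ b} hex

lemma bestH_min {X Y : Type*} [Nonempty Y] (C : (X → Y) → ℕ)
    {S' : Finset (X × Y)} {b : ℕ} (h : X → Y) (hh : mistakes h S' ≤ b) :
    C (bestH C S' b) ≤ C h := by
  have hex : ∃ h : X → Y, mistakes h S' ≤ b := ⟨h, hh⟩
  rw [bestH, dif_pos hex]
  exact Function.argminOn_le C {h | mistakes h S' ≤ b} hh

theorem stmt1 {X Y : Type*} [Nonempty Y] (C : (X → Y) → ℕ) :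
    ∃ L : Finset (X × Y) → X × ℕ → Y × ℕ × ℕ∞, IsRRR C L ∧
      ∀ (S' : Finset (X × Y)) (b c : ℕ),
        (∃ h : X → Y, C h ≤ c ∧ mistakes h S' ≤ b) →
        R4hat L S' b c = OPTR4hat C S' b c := by
  refine ⟨fun S' p =>
    (bestH C S' p.2 p.1, C (bestH C S' p.2),
      sInf {e : ℕ∞ | ∃ h : X → Y, mistakes h S' ≤ p.2 ∧ h p.1 ≠ bestH C S' p.2 p.1 ∧
        (C h : ℕ∞) = e}), ?_, ?_⟩
  · intro S' x b hex
    refine ⟨⟨bestH C S' b, rfl, bestH_mistakes C hex, rfl⟩, ?_⟩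
    intro h' hm hne
    exact sInf_le ⟨h', hm, hne, rfl⟩
  · intro S' b c ⟨h, hc, hm⟩
    ext x
    constructor
    · rintro ⟨hlow, hhigh⟩
      intro h0 h1 hc0 hc1 hm0 hm1
      have key : ∀ g : X → Y, C g ≤ c → mistakes g S' ≤ b → g x = bestH C S' b x := by
        intro g hgc hgm
        by_contra hne
        have : sInf {e : ℕ∞ | ∃ h : X → Y, mistakes h S' ≤ b ∧ h x ≠ bestH C S' b x ∧
            (C h : ℕ∞) = e} ≤ (C g : ℕ∞) := sInf_le ⟨g, hgm, hne, rfl⟩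
        have h2 : (c : ℕ∞) < (C g : ℕ∞) := lt_of_lt_of_le hhigh this
        exact absurd (Nat.cast_le.mpr hgc) (not_le.mpr h2)
      rw [key h0 hc0 hm0, key h1 hc1 hm1]
    · intro hx
      have hbc : C (bestH C S' b) ≤ c := le_trans (bestH_min C h hm) hc
      refine ⟨hbc, ?_⟩
      refine lt_of_lt_of_le (show (c : ℕ∞) < (c + 1 : ℕ) by exact_mod_cast Nat.lt_succ_self c)
        (le_sInf ?_)
      rintro e ⟨g, hgm, hgne, rfl⟩
      have : ¬ C g ≤ c := fun hgc => hgne (hx g (bestH C S' b) hgc hbc hgm (bestH_mistakes C ⟨h, hm⟩))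
      exact_mod_cast Nat.succ_le_of_lt (not_le.mp this)
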